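/- arXiv:1303.6719 — 2 statements merged into one kernel-verified Lean document; each statement's English description precedes it below -/
import Mathlib

section
/- Let A : ℝ^{n₁×n₂} → ℝ^{n₃} be a linear map that is (ε, 2k)-RIP with ε < 1. Suppose Z ∈ ℝ^{n₁×n₂} satisfies b = A(Z), Z(1,:) = Z(2,:), Z(n₁−1,:) = Z(n₁,:), and 0 < s(Z) ≤ k. Then Z is the unique such matrix: any Z̃ ∈ ℝ^{n₁×n₂} with b = A(Z̃), Z̃(1,:) = Z̃(2,:), Z̃(n₁−1,:) = Z̃(n₁,:), and 0 < s(Z̃) ≤ k must equal Z. -/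
/-- Row-difference sparsity: the number of indices `i ∈ {0,…,n₁−2}` such that
row `i` of `Z` differs from row `i+1` of `Z`. -/
noncomputable def rowDiffSparsity {n₁ n₂ : ℕ} (Z : Matrix (Fin n₁) (Fin n₂) ℝ) : ℕ :=
  (Finset.univ.filter fun i : Fin (n₁ - 1) =>
    Z ⟨i.1, by have := i.2; omega⟩ ≠ Z ⟨i.1 + 1, by have := i.2; omega⟩).card

/-- Boundary conditions: the first two rows of `Z` are equal and the
last two rows of `Z` are equal. -/
def boundaryRows {n₁ n₂ : ℕ} (hn : 2 ≤ n₁) (Z : Matrix (Fin n₁) (Fin n₂) ℝ) : Prop :=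
  Z ⟨0, by omega⟩ = Z ⟨1, by omega⟩ ∧ Z ⟨n₁ - 2, by omega⟩ = Z ⟨n₁ - 1, by omega⟩

/-- `(ε, k)`-RIP: for every nonzero `Z` satisfying the boundary conditions and
`0 < s(Z) ≤ k`, we have `| ‖A(Z)‖₂² / ‖Z‖_F² − 1 | < ε`. -/
def IsRIP {n₁ n₂ n₃ : ℕ} (hn : 2 ≤ n₁) (ε : ℝ) (k : ℕ)
    (A : Matrix (Fin n₁) (Fin n₂) ℝ →ₗ[ℝ] (Fin n₃ → ℝ)) : Prop :=
  ∀ Z : Matrix (Fin n₁) (Fin n₂) ℝ, Z ≠ 0 → boundaryRows hn Z →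
    0 < rowDiffSparsity Z → rowDiffSparsity Z ≤ k →
    |(∑ j, (A Z j) ^ 2) / (∑ i, ∑ j, (Z i j) ^ 2) - 1| < ε

lemma rowDiffSparsity_sub_le {n₁ n₂ : ℕ} (X Y : Matrix (Fin n₁) (Fin n₂) ℝ) :
    rowDiffSparsity (X - Y) ≤ rowDiffSparsity X + rowDiffSparsity Y := by
  classical
  unfold rowDiffSparsity
  refine le_trans (Finset.card_le_card ?_) (Finset.card_union_le _ _)
  intro i hi
  simp only [Finset.mem_filter, Finset.mem_union, Finset.mem_univ, true_and] at hi ⊢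
  by_contra h
  push_neg at h
  obtain ⟨hX, hY⟩ := h
  apply hi
  ext j
  simp [Matrix.sub_apply, hX, hY]

/-- Cauchy–Schwarz for double sums. -/
lemma double_cs {n₁ n₂ : ℕ} (X Y : Matrix (Fin n₁) (Fin n₂) ℝ) :
    (∑ i, ∑ j, X i j * Y i j) ^ 2 ≤ (∑ i, ∑ j, X i j ^ 2) * (∑ i, ∑ j, Y i j ^ 2) := by
  classical
  have h := Finset.sum_mul_sq_le_sq_mul_sq (Finset.univ : Finset (Fin n₁ × Fin n₂))
    (fun p => X p.1 p.2) (fun p => Y p.1 p.2)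
  simpa [Fintype.sum_prod_type] using h

/-- Theorem 1 (Uniqueness): if `A` is `(ε, 2k)`-RIP with `ε < 1` and `Z` is a
feasible point (`b = A(Z)`, boundary rows equal, `0 < s(Z) ≤ k`), then `Z` is
the unique such matrix. -/
theorem uniqueness {n₁ n₂ n₃ k : ℕ} (hn : 2 ≤ n₁) {ε : ℝ} (hε : ε < 1)
    (A : Matrix (Fin n₁) (Fin n₂) ℝ →ₗ[ℝ] (Fin n₃ → ℝ))
    (hA : IsRIP hn ε (2 * k) A)
    (b : Fin n₃ → ℝ) (Z : Matrix (Fin n₁) (Fin n₂) ℝ)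
    (hZb : b = A Z) (hZbd : boundaryRows hn Z)
    (hZpos : 0 < rowDiffSparsity Z) (hZk : rowDiffSparsity Z ≤ k) :
    ∀ Z' : Matrix (Fin n₁) (Fin n₂) ℝ,
      b = A Z' → boundaryRows hn Z' →
      0 < rowDiffSparsity Z' → rowDiffSparsity Z' ≤ k → Z' = Z := by
  classical
  intro Z' hZ'b hZ'bd hZ'pos hZ'k
  by_contra hne
  set D : Matrix (Fin n₁) (Fin n₂) ℝ := Z' - Z with hD
  have hD0 : D ≠ 0 := sub_ne_zero.mpr hne
  have hAD : A D = 0 := by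
    rw [hD, map_sub, ← hZb, ← hZ'b, sub_self]
  rcases Nat.eq_zero_or_pos (rowDiffSparsity D) with hs0 | hspos
  · -- D has all consecutive rows equal
    have hrows : ∀ i : Fin (n₁ - 1),
        D ⟨i.1, by have := i.2; omega⟩ = D ⟨i.1 + 1, by have := i.2; omega⟩ := by
      intro i
      by_contra hcon
      have : i ∈ (Finset.univ.filter fun i : Fin (n₁ - 1) =>
          D ⟨i.1, by have := i.2; omega⟩ ≠ D ⟨i.1 + 1, by have := i.2; omega⟩) := by
        simp [hcon]
      have := Finset.card_pos.mpr ⟨i, this⟩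
      unfold rowDiffSparsity at hs0
      omega
    -- consider W = Z + λ • D for suitable λ
    set c : ℝ := ∑ i, ∑ j, D i j ^ 2 with hc
    have hcpos : 0 < c := by
      rcases lt_or_eq_of_le (Finset.sum_nonneg fun i _ =>
        Finset.sum_nonneg fun j _ => sq_nonneg (D i j)) with h | h
      · exact h
      · exfalso; apply hD0
        ext i j
        have h1 : ∀ i ∈ (Finset.univ : Finset (Fin n₁)), (∑ j, D i j ^ 2) = 0 := by
          refine (Finset.sum_eq_zero_iff_of_nonneg fun i _ =>
            Finset.sum_nonneg fun j _ => sq_nonneg (D i j)).mp h.symm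
        have h2 := (Finset.sum_eq_zero_iff_of_nonneg
          (fun j _ => sq_nonneg (D i j))).mp (h1 i (Finset.mem_univ i)) j (Finset.mem_univ j)
        have := sq_eq_zero_iff.mp h2
        simpa using this
    set sZ : ℝ := ∑ i, ∑ j, Z i j ^ 2 with hsZ
    set sZD : ℝ := ∑ i, ∑ j, Z i j * D i j with hsZD
    set nb : ℝ := ∑ j, b j ^ 2 with hnb
    have hnbnn : 0 ≤ nb := Finset.sum_nonneg fun j _ => sq_nonneg _
    have hεpos : 0 < 1 - ε := by linarith
    set B : ℝ := nb / (1 - ε) with hB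
    have hBnn : 0 ≤ B := div_nonneg hnbnn (le_of_lt hεpos)
    set r : ℝ := Real.sqrt ((B + 1) / c) with hr
    set lam : ℝ := -(sZD / c) + r with hlam
    set W : Matrix (Fin n₁) (Fin n₂) ℝ := Z + lam • D with hW
    have hWentry : ∀ i j, W i j = Z i j + lam * D i j := by
      intro i j; simp [hW, Matrix.add_apply, Matrix.smul_apply, smul_eq_mul]
    have hWrow : ∀ i : Fin n₁, W i = Z i + lam • D i := by
      intro i; ext j; simp [hWentry, smul_eq_mul]
    -- sparsity of W equals sparsity of Z
    have hsW : rowDiffSparsity W = rowDiffSparsity Z := by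
      unfold rowDiffSparsity
      congr 1
      apply Finset.filter_congr
      intro i _
      have h := hrows i
      constructor
      · intro hWne hZeq
        apply hWne
        rw [hWrow, hWrow, hZeq, h]
      · intro hZne hWeq
        apply hZne
        rw [hWrow, hWrow, h] at hWeq
        exact add_right_cancel hWeq
    -- boundary rows of W
    have hWbd : boundaryRows hn W := by
      have h0 : D ⟨0, by omega⟩ = D ⟨1, by omega⟩ := by
        have := hrows ⟨0, by omega⟩
        simpa using this
      have h1 : D ⟨n₁ - 2, by omega⟩ = D ⟨n₁ - 1, by omega⟩ := by
        have := hrows ⟨n₁ - 2, by omega⟩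
        have heq : n₁ - 2 + 1 = n₁ - 1 := by omega
        simpa [heq] using this
      constructor
      · rw [hWrow, hWrow, hZbd.1, h0]
      · rw [hWrow, hWrow, hZbd.2, h1]
    -- value of A W
    have hAW : A W = b := by
      rw [hW, map_add, map_smul, hAD, smul_zero, add_zero, hZb]
    -- Frobenius norm of W
    have hSval : (∑ i, ∑ j, W i j ^ 2) = sZ + 2 * lam * sZD + lam ^ 2 * c := by
      have hterm : ∀ i j, W i j ^ 2
          = Z i j ^ 2 + (2 * lam) * (Z i j * D i j) + lam ^ 2 * D i j ^ 2 := by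
        intro i j; rw [hWentry]; ring
      simp only [hterm, Finset.sum_add_distrib, ← Finset.mul_sum]
      rfl
    have hr2 : r ^ 2 = (B + 1) / c := Real.sq_sqrt (by positivity)
    have hq : 0 ≤ sZ - sZD ^ 2 / c := by
      have hcs : sZD ^ 2 ≤ sZ * c := double_cs Z D
      rw [sub_nonneg, div_le_iff₀ hcpos]
      linarith
    have hSge : sZ + 2 * lam * sZD + lam ^ 2 * c ≥ B + 1 := by
      have key : sZ + 2 * lam * sZD + lam ^ 2 * c
          = (sZ - sZD ^ 2 / c) + c * r ^ 2 := by
        rw [hlam]; field_simp; ring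
      rw [key, hr2]
      have : c * ((B + 1) / c) = B + 1 := by field_simp
      rw [this]; linarith
    have hSpos : 0 < ∑ i, ∑ j, W i j ^ 2 := by rw [hSval]; linarith
    have hW0 : W ≠ 0 := by
      intro h
      rw [h] at hSpos
      simp at hSpos
    have hrip := hA W hW0 hWbd (by rw [hsW]; exact hZpos) (by rw [hsW]; omega)
    rw [hAW] at hrip
    have h1 : nb / (∑ i, ∑ j, W i j ^ 2) - 1 > -ε := neg_lt_of_abs_lt hrip
    have h2 : nb > (1 - ε) * (∑ i, ∑ j, W i j ^ 2) := by
      have := (lt_div_iff₀ hSpos).mp (by linarith : 1 - ε < nb / (∑ i, ∑ j, W i j ^ 2))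
      linarith
    have h3 : (1 - ε) * (∑ i, ∑ j, W i j ^ 2) ≥ (1 - ε) * (B + 1) := by
      apply mul_le_mul_of_nonneg_left _ (le_of_lt hεpos)
      rw [hSval]; exact hSge
    have h4 : (1 - ε) * (B + 1) = nb + (1 - ε) := by
      rw [hB, mul_add, mul_one, mul_div_cancel₀ nb (ne_of_gt hεpos)]
    linarith
  · -- D itself is a witness for RIP with A D = 0
    have hDbd : boundaryRows hn D := by
      constructor
      · ext j
        have h1 := congrFun hZbd.1 j
        have h2 := congrFun hZ'bd.1 j
        simp only [hD, Matrix.sub_apply]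
        rw [h1, h2]
      · ext j
        have h1 := congrFun hZbd.2 j
        have h2 := congrFun hZ'bd.2 j
        simp only [hD, Matrix.sub_apply]
        rw [h1, h2]
    have hDk : rowDiffSparsity D ≤ 2 * k := by
      have h := rowDiffSparsity_sub_le Z' Z
      rw [← hD] at h
      omega
    have hrip := hA D hD0 hDbd hspos hDk
    have hADj : ∀ j, A D j = 0 := by intro j; rw [hAD]; rfl
    simp only [hADj] at hrip
    rw [show (∑ _j : Fin n₃, (0:ℝ) ^ 2) = 0 by simp, zero_div] at hrip
    rw [abs_of_nonpos (by norm_num)] at hrip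
    linarith
end

section
/- Let A : ℝ^{n₁×n₂} → ℝ^{n₃} be a linear map that is (ε, 2k)-RIP with ε < 1. Suppose Z* ∈ ℝ^{n₁×n₂} satisfies b = A(Z*), Z*(1,:) = Z*(2,:), Z*(n₁−1,:) = Z*(n₁,:), 0 < s(Z*) ≤ k, and rank(Z*) = 1. Then Z* minimizes the row-difference sparsity among all rank-one feasible points: for every Z ∈ ℝ^{n₁×n₂} with b = A(Z), rank(Z) = 1, Z(1,:) = Z(2,:), Z(n₁−1,:) = Z(n₁,:), and s(Z) > 0, one has s(Z) ≥ s(Z*). -/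
/-- Corollary (Recoverability): if `A` is `(ε, 2k)`-RIP with `ε < 1` and `Z*` is
a rank-one feasible point with `0 < s(Z*) ≤ k`, then `Z*` minimizes the
row-difference sparsity among all rank-one feasible points with positive
row-difference sparsity. -/
theorem recoverability {n₁ n₂ n₃ k : ℕ} (hn : 2 ≤ n₁) {ε : ℝ} (hε : ε < 1)
    (A : Matrix (Fin n₁) (Fin n₂) ℝ →ₗ[ℝ] (Fin n₃ → ℝ))
    (hA : IsRIP hn ε (2 * k) A)
    (b : Fin n₃ → ℝ) (Zstar : Matrix (Fin n₁) (Fin n₂) ℝ)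
    (hZb : b = A Zstar) (hZbd : boundaryRows hn Zstar)
    (hZpos : 0 < rowDiffSparsity Zstar) (hZk : rowDiffSparsity Zstar ≤ k)
    (hZrank : Zstar.rank = 1) :
    ∀ Z : Matrix (Fin n₁) (Fin n₂) ℝ,
      b = A Z → Z.rank = 1 → boundaryRows hn Z → 0 < rowDiffSparsity Z →
      rowDiffSparsity Zstar ≤ rowDiffSparsity Z := by
  intro Z hZb' hZrank' hZbd' hZpos'
  by_contra hlt
  push_neg at hlt
  set W := Zstar - Z with hWdef
  have hrow : ∀ a : Fin n₁, W a = Zstar a - Z a := by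
    intro a; funext j; simp [hWdef, Matrix.sub_apply]
  have hAW : A W = 0 := by
    rw [hWdef, map_sub, ← hZb, ← hZb', sub_self]
  rcases eq_or_ne W 0 with hW0 | hW0
  · have : Zstar = Z := by rwa [hWdef, sub_eq_zero] at hW0
    rw [this] at hlt; exact lt_irrefl _ hlt
  · rcases Nat.eq_zero_or_pos (rowDiffSparsity W) with hs0 | hspos
    · -- all consecutive rows of W equal, so sparsities of Zstar and Z agree
      have hall : ∀ i : Fin (n₁ - 1),
          W ⟨i.1, by have := i.2; omega⟩ = W ⟨i.1 + 1, by have := i.2; omega⟩ := by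
        intro i
        by_contra hne
        have : i ∈ (Finset.univ.filter fun i : Fin (n₁ - 1) =>
            W ⟨i.1, by have := i.2; omega⟩ ≠ W ⟨i.1 + 1, by have := i.2; omega⟩) := by
          simp [hne]
        have := Finset.card_pos.mpr ⟨i, this⟩
        unfold rowDiffSparsity at hs0
        omega
      have heq : rowDiffSparsity Zstar = rowDiffSparsity Z := by
        unfold rowDiffSparsity
        congr 1
        apply Finset.filter_congr
        intro i _
        have h1 := hall i
        rw [hrow, hrow, sub_eq_sub_iff_sub_eq_sub] at h1
        constructor <;> intro h hc
        · exact h (sub_eq_zero.mp (by rw [h1, hc, sub_self]))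
        · exact h (sub_eq_zero.mp (by rw [← h1, hc, sub_self]))
      omega
    · -- apply RIP to W
      have hbd : boundaryRows hn W := by
        obtain ⟨h1, h2⟩ := hZbd
        obtain ⟨h1', h2'⟩ := hZbd'
        constructor
        · rw [hrow, hrow, h1, h1']
        · rw [hrow, hrow, h2, h2']
      have hsub : (Finset.univ.filter fun i : Fin (n₁ - 1) =>
            W ⟨i.1, by have := i.2; omega⟩ ≠ W ⟨i.1 + 1, by have := i.2; omega⟩) ⊆
          (Finset.univ.filter fun i : Fin (n₁ - 1) =>
            Zstar ⟨i.1, by have := i.2; omega⟩ ≠ Zstar ⟨i.1 + 1, by have := i.2; omega⟩) ∪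
          (Finset.univ.filter fun i : Fin (n₁ - 1) =>
            Z ⟨i.1, by have := i.2; omega⟩ ≠ Z ⟨i.1 + 1, by have := i.2; omega⟩) := by
        intro i hi
        simp only [Finset.mem_filter, Finset.mem_union, Finset.mem_univ, true_and] at hi ⊢
        by_contra hc
        push_neg at hc
        obtain ⟨c1, c2⟩ := hc
        apply hi
        rw [hrow, hrow, c1, c2]
      have hk2 : rowDiffSparsity W ≤ 2 * k := by
        have := Finset.card_le_card hsub
        have := Finset.card_union_le
          (Finset.univ.filter fun i : Fin (n₁ - 1) =>
            Zstar ⟨i.1, by have := i.2; omega⟩ ≠ Zstar ⟨i.1 + 1, by have := i.2; omega⟩)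
          (Finset.univ.filter fun i : Fin (n₁ - 1) =>
            Z ⟨i.1, by have := i.2; omega⟩ ≠ Z ⟨i.1 + 1, by have := i.2; omega⟩)
        unfold rowDiffSparsity at *
        omega
      have hrip := hA W hW0 hbd hspos hk2
      rw [hAW] at hrip
      simp only [Pi.zero_apply] at hrip
      have : |(0 : ℝ) - 1| < ε := by simpa using hrip
      rw [zero_sub, abs_neg, abs_one] at this
      linarith
end
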